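/- Under Assumptions A1–A3 and A5: (i) if (u, λ) ∈ U × Λ* solves the interface impedance trace formulation ((A + α T^⊤ M T) u − T^⊤ λ = f and −α X^⊤ (M + X^⊤ M X) T u + (I + X^⊤) λ = 0), then λ solves the Schur complement equation (I − X^⊤ S) λ = d; (ii) conversely, if λ ∈ Λ* solves (I − X^⊤ S) λ = d and u := Ã^{-1} (f + T^⊤ λ), then (u, λ) solves the interface impedance trace formulation. -/

import Mathlib

set_option synthInstance.maxHeartbeats 1000000
set_option maxHeartbeats 2000000


/-- The transpose (dual map) `B^⊤ : Y* → X*` of a bounded linear operator `B : X → Y`. -/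
noncomputable def trOp {X Y : Type*} [NormedAddCommGroup X] [NormedSpace ℂ X]
    [NormedAddCommGroup Y] [NormedSpace ℂ Y] (B : X →L[ℂ] Y) :
    (Y →L[ℂ] ℂ) →L[ℂ] (X →L[ℂ] ℂ) :=
  (ContinuousLinearMap.compL ℂ X Y ℂ).flip B

/-- The scattering operator `S = −I + α (M + X^⊤ M X) T Ã⁻¹ T^⊤`, with `Atinv = Ã⁻¹`. -/
noncomputable def scatOp {U Lam : Type*}
    [NormedAddCommGroup U] [NormedSpace ℂ U] [NormedAddCommGroup Lam] [NormedSpace ℂ Lam]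
    (T : U →L[ℂ] Lam) (X : Lam →L[ℂ] Lam) (M : Lam →L[ℂ] (Lam →L[ℂ] ℂ))
    (Atinv : (U →L[ℂ] ℂ) →L[ℂ] U) (α : ℂ) :
    (Lam →L[ℂ] ℂ) →L[ℂ] (Lam →L[ℂ] ℂ) :=
  -(ContinuousLinearMap.id ℂ (Lam →L[ℂ] ℂ)) +
    α • (((M + (trOp X).comp (M.comp X)).comp T).comp (Atinv.comp (trOp T)))

/-- equivalence of the interface impedance trace formulation with its
Schur complement equation `(I − X^⊤ S) λ = d`. -/
theorem statement10
    {Uhat U Lam : Type*}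
    [NormedAddCommGroup Uhat] [InnerProductSpace ℂ Uhat] [CompleteSpace Uhat]
    [NormedAddCommGroup U] [InnerProductSpace ℂ U] [CompleteSpace U]
    [NormedAddCommGroup Lam] [InnerProductSpace ℂ Lam] [CompleteSpace Lam]
    (R : Uhat →L[ℂ] U) (T : U →L[ℂ] Lam) (X : Lam →L[ℂ] Lam)
    -- Assumption A1
    (hRinj : LinearMap.ker (R : Uhat →ₗ[ℂ] U) = ⊥)
    (hRclosed : IsClosed (Set.range R))
    -- Assumption A2
    (hX2 : X.comp X = ContinuousLinearMap.id ℂ Lam)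
    (hA2 : LinearMap.range (R : Uhat →ₗ[ℂ] U) = LinearMap.ker (((ContinuousLinearMap.id ℂ Lam - X).comp T : U →L[ℂ] Lam) : U →ₗ[ℂ] Lam))
    (A : U →L[ℂ] (U →L[ℂ] ℂ)) (f : U →L[ℂ] ℂ)
    -- `Â = R^⊤ A R` bijective with bounded inverse
    (Ahatinv : (Uhat →L[ℂ] ℂ) →L[ℂ] Uhat)
    (hAhat_left : ∀ uhat : Uhat, Ahatinv (trOp R (A (R uhat))) = uhat)
    (hAhat_right : ∀ g : Uhat →L[ℂ] ℂ, trOp R (A (R (Ahatinv g))) = g)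
    (α : ℂ) (hα : α ≠ 0)
    (M : Lam →L[ℂ] (Lam →L[ℂ] ℂ))
    -- Assumption A3: `M + X^⊤ M X` has a bounded inverse
    (Ninv : (Lam →L[ℂ] ℂ) →L[ℂ] Lam)
    (hNl : ∀ l : Lam, Ninv ((M + (trOp X).comp (M.comp X)) l) = l)
    (hNr : ∀ μ : Lam →L[ℂ] ℂ, (M + (trOp X).comp (M.comp X)) (Ninv μ) = μ)
    -- Assumption A5: `Ã = A + α T^⊤ M T` has a bounded inverse
    (Atinv : (U →L[ℂ] ℂ) →L[ℂ] U)
    (hAt_l : ∀ u : U, Atinv ((A + α • ((trOp T).comp (M.comp T))) u) = u)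
    (hAt_r : ∀ g : U →L[ℂ] ℂ, (A + α • ((trOp T).comp (M.comp T))) (Atinv g) = g) :
    -- (i)
    (∀ (u : U) (lam : Lam →L[ℂ] ℂ),
      (A + α • ((trOp T).comp (M.comp T))) u - trOp T lam = f →
      -(α • trOp X ((M + (trOp X).comp (M.comp X)) (T u))) + (lam + trOp X lam) = 0 →
      lam - trOp X (scatOp T X M Atinv α lam) =
        α • trOp X ((M + (trOp X).comp (M.comp X)) (T (Atinv f)))) ∧
    -- (ii)
    (∀ lam : Lam →L[ℂ] ℂ,
      lam - trOp X (scatOp T X M Atinv α lam) =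
        α • trOp X ((M + (trOp X).comp (M.comp X)) (T (Atinv f))) →
      (A + α • ((trOp T).comp (M.comp T))) (Atinv (f + trOp T lam)) - trOp T lam = f ∧
      -(α • trOp X ((M + (trOp X).comp (M.comp X)) (T (Atinv (f + trOp T lam))))) +
        (lam + trOp X lam) = 0) := by
  have hscat : ∀ lam : Lam →L[ℂ] ℂ, scatOp T X M Atinv α lam
      = -lam + α • ((M + (trOp X).comp (M.comp X)) (T (Atinv (trOp T lam)))) := by
    intro lam; simp [scatOp]
  constructor
  · intro u lam h1 h2
    have hu : Atinv (trOp T lam) = u - Atinv f := by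
      have h1' : (A + α • ((trOp T).comp (M.comp T))) u = f + trOp T lam := by
        rw [← h1]; abel
      have := hAt_l u
      rw [h1', map_add] at this
      rw [← this]; abel
    have h2' : α • trOp X ((M + (trOp X).comp (M.comp X)) (T u)) = lam + trOp X lam := by
      rw [neg_add_eq_zero] at h2; exact h2
    rw [hscat, hu]
    simp only [map_sub, map_neg, map_add, map_smul, smul_sub]
    rw [h2']
    abel
  · intro lam h
    refine ⟨by rw [hAt_r]; abel, ?_⟩
    rw [hscat] at h
    simp only [map_add, map_neg, map_smul, smul_add] at h ⊢
    rw [neg_add_eq_zero, ← h]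
    abel
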